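/- Let κ : ℝ → ℝ be differentiable and μ ∈ ℝ. For every twice continuously differentiable u : ℝ → ℂ² and every t ∈ ℝ: (D(μ)(D(μ)u))(t) = −ν_F²|k'|²·u''(t) + (μ²ν_F²|ℓ|² + ϑ⋆²κ(t)²)·u(t) − i·ϑ⋆·κ'(t)·N·u(t), where N is the 2×2 matrix with rows (0, −ν⋆k') and (conj(ν⋆k'), 0). (The square of the Dirac operator D(μ) is a Schrödinger operator with the effective potential ϑ⋆²κ² + ϑ⋆(D_tκ)·(ν_F|k'|)m₁m₃.) -/

import Mathlib

open Matrix

/-- The matrix `m₁ = (ν_F|k'|)⁻¹ [[0, ν⋆k'], [conj(ν⋆k'), 0]]`. -/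
noncomputable def m1 (ν k' : ℂ) : Matrix (Fin 2) (Fin 2) ℂ :=
  (‖ν‖ * ‖k'‖)⁻¹ • !![0, ν * k'; (starRingEnd ℂ) (ν * k'), 0]

/-- The matrix `m₂ = (ν_F|ℓ|)⁻¹ [[0, ν⋆ℓ], [conj(ν⋆ℓ), 0]]`. -/
noncomputable def m2 (ν ℓ : ℂ) : Matrix (Fin 2) (Fin 2) ℂ :=
  (‖ν‖ * ‖ℓ‖)⁻¹ • !![0, ν * ℓ; (starRingEnd ℂ) (ν * ℓ), 0]

/-- The matrix `m₃ = [[1, 0], [0, −1]]`. -/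
def m3 : Matrix (Fin 2) (Fin 2) ℂ := !![1, 0; 0, -1]

/-- The Dirac operator `D(μ) = ν_F|k'| m₁ D_t + μν_F|ℓ| m₂ + ϑ⋆κ m₃`, acting pointwise on
differentiable functions `u : ℝ → ℂ²`. -/
noncomputable def Dop (ϑstar : ℝ) (ν k' ℓ : ℂ) (κ : ℝ → ℝ) (μ : ℝ)
    (u : ℝ → Fin 2 → ℂ) (t : ℝ) : Fin 2 → ℂ :=
  (‖ν‖ * ‖k'‖) • (m1 ν k').mulVec ((-Complex.I) • deriv u t) +
    (μ * ‖ν‖ * ‖ℓ‖) • (m2 ν ℓ).mulVec (u t) +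
    (ϑstar * κ t) • m3.mulVec (u t)

lemma Dop_zero (ϑstar : ℝ) {ν k' : ℂ} (ℓ : ℂ) (hν : ν ≠ 0) (hk : k' ≠ 0) (hℓ : ℓ ≠ 0)
    (κ : ℝ → ℝ) (μ : ℝ) (u : ℝ → Fin 2 → ℂ) (t : ℝ) :
    Dop ϑstar ν k' ℓ κ μ u t 0 =
      (ν * k') * (-Complex.I * deriv u t 1) + (μ : ℂ) * (ν * ℓ) * u t 1
        + ((ϑstar * κ t : ℝ) : ℂ) * u t 0 := by
  have h1 : ((‖ν‖ : ℝ) : ℂ) ≠ 0 := by simp [norm_ne_zero_iff, hν]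
  have h2 : ((‖k'‖ : ℝ) : ℂ) ≠ 0 := by simp [norm_ne_zero_iff, hk]
  have h3 : ((‖ℓ‖ : ℝ) : ℂ) ≠ 0 := by simp [norm_ne_zero_iff, hℓ]
  simp [Dop, m1, m2, m3, Matrix.mulVec, dotProduct, Fin.sum_univ_two,
    Complex.real_smul]
  field_simp

lemma Dop_one (ϑstar : ℝ) {ν k' : ℂ} (ℓ : ℂ) (hν : ν ≠ 0) (hk : k' ≠ 0) (hℓ : ℓ ≠ 0)
    (κ : ℝ → ℝ) (μ : ℝ) (u : ℝ → Fin 2 → ℂ) (t : ℝ) :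
    Dop ϑstar ν k' ℓ κ μ u t 1 =
      (starRingEnd ℂ) (ν * k') * (-Complex.I * deriv u t 0)
        + (μ : ℂ) * (starRingEnd ℂ) (ν * ℓ) * u t 0
        - ((ϑstar * κ t : ℝ) : ℂ) * u t 1 := by
  have h1 : ((‖ν‖ : ℝ) : ℂ) ≠ 0 := by simp [norm_ne_zero_iff, hν]
  have h2 : ((‖k'‖ : ℝ) : ℂ) ≠ 0 := by simp [norm_ne_zero_iff, hk]
  have h3 : ((‖ℓ‖ : ℝ) : ℂ) ≠ 0 := by simp [norm_ne_zero_iff, hℓ]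
  simp [Dop, m1, m2, m3, Matrix.mulVec, dotProduct, Fin.sum_univ_two,
    Complex.real_smul, _root_.map_mul]
  field_simp
  ring

lemma conj_mul_self (a : ℂ) : a * (starRingEnd ℂ) a = ((‖a‖ : ℝ) : ℂ) ^ 2 := by
  rw [Complex.mul_conj, Complex.normSq_eq_norm_sq]
  push_cast
  ring

theorem stmt16 (ϑstar : ℝ) (hϑstar : ϑstar ≠ 0) (ν k' ℓ : ℂ)
    (hν : ν ≠ 0) (hk : k' ≠ 0) (hℓ : ℓ ≠ 0)
    (horth : (k' * (starRingEnd ℂ) ℓ).re = 0)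
    (κ : ℝ → ℝ) (hκ : Differentiable ℝ κ) (μ : ℝ)
    (u : ℝ → Fin 2 → ℂ) (hu : ContDiff ℝ 2 u) :
    ∀ t : ℝ,
      Dop ϑstar ν k' ℓ κ μ (fun r => Dop ϑstar ν k' ℓ κ μ u r) t =
        (-(‖ν‖ ^ 2 * ‖k'‖ ^ 2)) • deriv (deriv u) t +
          (μ ^ 2 * ‖ν‖ ^ 2 * ‖ℓ‖ ^ 2 + ϑstar ^ 2 * κ t ^ 2) • u t -
          (Complex.I * ((ϑstar * deriv κ t : ℝ) : ℂ)) •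
            (!![0, -(ν * k'); (starRingEnd ℂ) (ν * k'), 0]).mulVec (u t) := by
  have hud : Differentiable ℝ u := hu.differentiable (by norm_num)
  have hdu : Differentiable ℝ (deriv u) := by
    have h2 : ContDiff ℝ ((1 : WithTop ℕ∞) + 1) u := by norm_num; exact hu
    exact ((contDiff_succ_iff_deriv.mp h2).2.2).differentiable one_ne_zero
  -- algebraic identities
  have hww : (ν * k') * (starRingEnd ℂ) (ν * k') = ((‖ν‖ : ℝ) : ℂ) ^ 2 * ((‖k'‖ : ℝ) : ℂ) ^ 2 := by
    rw [conj_mul_self]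
    push_cast [norm_mul]
    ring
  have hzz : (ν * ℓ) * (starRingEnd ℂ) (ν * ℓ) = ((‖ν‖ : ℝ) : ℂ) ^ 2 * ((‖ℓ‖ : ℝ) : ℂ) ^ 2 := by
    rw [conj_mul_self]
    push_cast [norm_mul]
    ring
  have hcross : (ν * k') * (starRingEnd ℂ) (ν * ℓ) + (starRingEnd ℂ) (ν * k') * (ν * ℓ) = 0 := by
    have h1 : (starRingEnd ℂ) ((ν * k') * (starRingEnd ℂ) (ν * ℓ)) =
        (starRingEnd ℂ) (ν * k') * (ν * ℓ) := by
      simp [_root_.map_mul]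
    have h2 : (ν * k') * (starRingEnd ℂ) (ν * ℓ) =
        ((Complex.normSq ν : ℝ) : ℂ) * (k' * (starRingEnd ℂ) ℓ) := by
      rw [← Complex.mul_conj]
      push_cast [_root_.map_mul]
      ring
    have h3 : ((ν * k') * (starRingEnd ℂ) (ν * ℓ)).re = 0 := by
      rw [h2, Complex.re_ofReal_mul, horth, mul_zero]
    calc (ν * k') * (starRingEnd ℂ) (ν * ℓ) + (starRingEnd ℂ) (ν * k') * (ν * ℓ)
        = (ν * k') * (starRingEnd ℂ) (ν * ℓ) +
            (starRingEnd ℂ) ((ν * k') * (starRingEnd ℂ) (ν * ℓ)) := by rw [h1]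
      _ = ((2 * ((ν * k') * (starRingEnd ℂ) (ν * ℓ)).re : ℝ) : ℂ) := Complex.add_conj _
      _ = 0 := by rw [h3]; norm_num
  intro t
  -- componentwise derivatives
  have hU : ∀ r (i : Fin 2), HasDerivAt (fun s => u s i) (deriv u r i) r :=
    fun r i => hasDerivAt_pi.mp (hud r).hasDerivAt i
  have hDU : ∀ r (i : Fin 2), HasDerivAt (fun s => deriv u s i) (deriv (deriv u) r i) r :=
    fun r i => hasDerivAt_pi.mp (hdu r).hasDerivAt i
  have hK : HasDerivAt (fun s => ((ϑstar * κ s : ℝ) : ℂ)) ((ϑstar * deriv κ t : ℝ) : ℂ) t :=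
    ((hκ t).hasDerivAt.const_mul ϑstar).ofReal_comp
  set e0 : ℂ := (ν * k') * (-Complex.I * deriv (deriv u) t 1) +
      (μ : ℂ) * (ν * ℓ) * deriv u t 1 +
      (((ϑstar * deriv κ t : ℝ) : ℂ) * u t 0 + ((ϑstar * κ t : ℝ) : ℂ) * deriv u t 0) with he0
  set e1 : ℂ := (starRingEnd ℂ) (ν * k') * (-Complex.I * deriv (deriv u) t 0) +
      (μ : ℂ) * (starRingEnd ℂ) (ν * ℓ) * deriv u t 0 -
      (((ϑstar * deriv κ t : ℝ) : ℂ) * u t 1 + ((ϑstar * κ t : ℝ) : ℂ) * deriv u t 1) with he1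
  have hv0 : HasDerivAt (fun r => Dop ϑstar ν k' ℓ κ μ u r 0) e0 t := by
    have hfun : (fun r => Dop ϑstar ν k' ℓ κ μ u r 0) =
        fun r => (ν * k') * (-Complex.I * deriv u r 1) + (μ : ℂ) * (ν * ℓ) * u r 1
          + ((ϑstar * κ r : ℝ) : ℂ) * u r 0 :=
      funext fun r => Dop_zero ϑstar ℓ hν hk hℓ κ μ u r
    rw [hfun, he0]
    exact ((((hDU t 1).const_mul (-Complex.I)).const_mul (ν * k')).add
      ((hU t 1).const_mul ((μ : ℂ) * (ν * ℓ)))).add (hK.mul (hU t 0))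
  have hv1 : HasDerivAt (fun r => Dop ϑstar ν k' ℓ κ μ u r 1) e1 t := by
    have hfun : (fun r => Dop ϑstar ν k' ℓ κ μ u r 1) =
        fun r => (starRingEnd ℂ) (ν * k') * (-Complex.I * deriv u r 0)
          + (μ : ℂ) * (starRingEnd ℂ) (ν * ℓ) * u r 0
          - ((ϑstar * κ r : ℝ) : ℂ) * u r 1 :=
      funext fun r => Dop_one ϑstar ℓ hν hk hℓ κ μ u r
    rw [hfun, he1]
    exact ((((hDU t 0).const_mul (-Complex.I)).const_mul ((starRingEnd ℂ) (ν * k'))).add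
      ((hU t 0).const_mul ((μ : ℂ) * (starRingEnd ℂ) (ν * ℓ)))).sub (hK.mul (hU t 1))
  have hV : HasDerivAt (fun r => Dop ϑstar ν k' ℓ κ μ u r) ![e0, e1] t := by
    apply hasDerivAt_pi.mpr
    intro i
    fin_cases i
    · simpa using hv0
    · simpa using hv1
  have hder : deriv (fun r => Dop ϑstar ν k' ℓ κ μ u r) t = ![e0, e1] := hV.deriv
  funext i
  fin_cases i
  · show Dop ϑstar ν k' ℓ κ μ (fun r => Dop ϑstar ν k' ℓ κ μ u r) t 0 = _
    rw [Dop_zero ϑstar ℓ hν hk hℓ κ μ (fun r => Dop ϑstar ν k' ℓ κ μ u r) t, hder]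
    simp only [Matrix.cons_val_one, Matrix.head_cons, Matrix.cons_val_zero]
    rw [he1, Dop_zero ϑstar ℓ hν hk hℓ κ μ u t, Dop_one ϑstar ℓ hν hk hℓ κ μ u t]
    simp only [Pi.add_apply, Pi.sub_apply, Pi.smul_apply, Matrix.mulVec, dotProduct,
      Fin.sum_univ_two, Matrix.cons_val', Matrix.cons_val_zero, Matrix.cons_val_one,
      Matrix.head_cons, Matrix.empty_val', Matrix.cons_val_fin_one, Matrix.head_fin_const,
      Matrix.of_apply, smul_eq_mul, Complex.real_smul, Matrix.cons_val_fin_one]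
    norm_num [Matrix.cons_val_zero, Matrix.cons_val_one, Matrix.head_cons]
    simp only [_root_.map_mul] at hww hzz hcross ⊢
    push_cast
    linear_combination (-(deriv (deriv u) t 0)) * hww + ((μ : ℂ) ^ 2 * u t 0) * hzz +
      (-(Complex.I) * (μ : ℂ) * deriv u t 0) * hcross +
      (ν * k' * ((starRingEnd ℂ) ν * (starRingEnd ℂ) k') * deriv (deriv u) t 0) * Complex.I_sq
  · show Dop ϑstar ν k' ℓ κ μ (fun r => Dop ϑstar ν k' ℓ κ μ u r) t 1 = _
    rw [Dop_one ϑstar ℓ hν hk hℓ κ μ (fun r => Dop ϑstar ν k' ℓ κ μ u r) t, hder]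
    simp only [Matrix.cons_val_one, Matrix.head_cons, Matrix.cons_val_zero]
    rw [he0, Dop_zero ϑstar ℓ hν hk hℓ κ μ u t, Dop_one ϑstar ℓ hν hk hℓ κ μ u t]
    simp only [Pi.add_apply, Pi.sub_apply, Pi.smul_apply, Matrix.mulVec, dotProduct,
      Fin.sum_univ_two, Matrix.cons_val', Matrix.cons_val_zero, Matrix.cons_val_one,
      Matrix.head_cons, Matrix.empty_val', Matrix.cons_val_fin_one, Matrix.head_fin_const,
      Matrix.of_apply, smul_eq_mul, Complex.real_smul, Matrix.cons_val_fin_one]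
    norm_num [Matrix.cons_val_zero, Matrix.cons_val_one, Matrix.head_cons]
    simp only [_root_.map_mul] at hww hzz hcross ⊢
    push_cast
    linear_combination (-(deriv (deriv u) t 1)) * hww + ((μ : ℂ) ^ 2 * u t 1) * hzz +
      (-(Complex.I) * (μ : ℂ) * deriv u t 1) * hcross +
      (ν * k' * ((starRingEnd ℂ) ν * (starRingEnd ℂ) k') * deriv (deriv u) t 1) * Complex.I_sq
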